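/- Let g : ℝ^r → ℝ be μ-strongly convex with minimizer y*, and let p(y) = f(y) + λ(g(y) - g(y*)) be μ_λ-strongly convex with minimizer y_λ*, where f is differentiable and ‖∇f(y*)‖ ≤ C. If λ > 2L_{f,1}/μ so that μ_λ = λμ/2, then ‖y* - y_λ*‖ ≤ 2C/(λμ). -/

import Mathlib

open Set
open scoped RealInnerProductSpace

lemma quadGrowth {E : Type*} [NormedAddCommGroup E] [NormedSpace ℝ E] {m : ℝ} {p : E → ℝ}
    (hp : StrongConvexOn univ m p) {x : E} (hx : IsMinOn p univ x) (y : E) :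
    p x + m / 2 * ‖y - x‖ ^ 2 ≤ p y := by
  set c := m / 2 * ‖y - x‖ ^ 2 with hc
  have key : ∀ t : ℝ, t ∈ Ioo (0:ℝ) 1 → (1 - t) * c ≤ p y - p x := by
    intro t ht
    have h1 := hp.2 (mem_univ y) (mem_univ x) ht.1.le (by linarith [ht.2] : (0:ℝ) ≤ 1 - t)
      (by ring)
    have h2 : p x ≤ p (t • y + (1 - t) • x) := hx (mem_univ _)
    simp only [smul_eq_mul, ← hc] at h1
    nlinarith [ht.1]
  haveI : (nhdsWithin (0:ℝ) (Ioo 0 1)).NeBot := by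
    apply mem_closure_iff_nhdsWithin_neBot.mp
    rw [closure_Ioo one_ne_zero.symm]
    exact ⟨le_refl _, zero_le_one⟩
  have lim : Filter.Tendsto (fun t : ℝ => (1 - t) * c) (nhdsWithin 0 (Ioo 0 1)) (nhds c) := by
    have hcont : Continuous fun t : ℝ => (1 - t) * c := by continuity
    exact Filter.Tendsto.mono_left (by simpa using hcont.tendsto 0) nhdsWithin_le_nhds
  have : c ≤ p y - p x :=
    le_of_tendsto lim (Filter.eventually_of_mem self_mem_nhdsWithin key)
  linarith

lemma descent {E : Type*} [NormedAddCommGroup E] [InnerProductSpace ℝ E] [CompleteSpace E] {L : ℝ}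
    {f : E → ℝ} {f' : E → E}
    (hf : ∀ y, HasGradientAt f (f' y) y)
    (hlip : ∀ y₁ y₂, ‖f' y₁ - f' y₂‖ ≤ L * ‖y₁ - y₂‖) (x y : E) :
    f y ≤ f x + ⟪f' x, y - x⟫ + L / 2 * ‖y - x‖ ^ 2 := by
  set d := y - x with hd
  have hline : ∀ t : ℝ, HasDerivAt (fun s : ℝ => f (x + s • d)) ⟪f' (x + t • d), d⟫ t := by
    intro t
    have h1 : HasDerivAt (fun s : ℝ => x + s • d) d t := by
      simpa using ((hasDerivAt_id t).smul_const d).const_add x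
    have h2 := (hf (x + t • d)).hasFDerivAt
    have := h2.comp_hasDerivAt t h1
    simpa [InnerProductSpace.toDual_apply_apply, Function.comp_def] using this
  set h : ℝ → ℝ := fun t => f (x + t • d) - t * ⟪f' x, d⟫ - L / 2 * t ^ 2 * ‖d‖ ^ 2 with hh
  have hderiv : ∀ t : ℝ,
      HasDerivAt h (⟪f' (x + t • d), d⟫ - ⟪f' x, d⟫ - L * t * ‖d‖ ^ 2) t := by
    intro t
    have h1 := hline t
    have h2 : HasDerivAt (fun s : ℝ => s * ⟪f' x, d⟫) ⟪f' x, d⟫ t := by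
      simpa using (hasDerivAt_id t).mul_const ⟪f' x, d⟫
    have h3 : HasDerivAt (fun s : ℝ => L / 2 * s ^ 2 * ‖d‖ ^ 2) (L * t * ‖d‖ ^ 2) t := by
      have := ((hasDerivAt_pow 2 t).const_mul (L / 2)).mul_const (‖d‖ ^ 2)
      exact this.congr_deriv (by rw [show 2 - 1 = 1 from rfl]; push_cast; ring)
    simpa [hh, Pi.sub_def] using (h1.sub h2).sub h3
  have mono : AntitoneOn h (Icc (0:ℝ) 1) := by
    apply antitoneOn_of_deriv_nonpos (convex_Icc 0 1)
    · exact fun t _ => ((hderiv t).differentiableAt).continuousAt.continuousWithinAt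
    · exact fun t _ => ((hderiv t).differentiableAt).differentiableWithinAt
    · intro t ht
      rw [interior_Icc] at ht
      rw [(hderiv t).deriv]
      have hb : ⟪f' (x + t • d), d⟫ - ⟪f' x, d⟫ ≤ L * t * ‖d‖ ^ 2 := by
        rw [← inner_sub_left]
        calc ⟪f' (x + t • d) - f' x, d⟫ ≤ ‖f' (x + t • d) - f' x‖ * ‖d‖ :=
              real_inner_le_norm _ _
          _ ≤ (L * ‖(x + t • d) - x‖) * ‖d‖ :=
              mul_le_mul_of_nonneg_right (hlip _ _) (norm_nonneg _)
          _ = L * t * ‖d‖ ^ 2 := by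
              rw [add_sub_cancel_left, norm_smul, Real.norm_eq_abs, abs_of_pos ht.1]
              ring
      linarith
  have hfin := mono (left_mem_Icc.mpr zero_le_one) (right_mem_Icc.mpr zero_le_one) zero_le_one
  simp only [hh, one_smul, zero_smul, add_zero, one_pow, mul_one, zero_pow, mul_zero,
    zero_mul, sub_zero] at hfin
  have hxy : x + d = y := by rw [hd]; abel
  rw [hxy] at hfin
  linarith

/-- Lemma 1 (inner-level penalty error): if `g` is `μ`-strongly convex with minimizer `y*`,
`f` has `L`-Lipschitz gradient with `‖∇f(y*)‖ ≤ C`, `λ > 2L/μ`, and the penalty function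
`p(y) = f y + λ (g y - g y*)` is `(λμ/2)`-strongly convex with minimizer `yλ*`, then
`‖y* - yλ*‖ ≤ 2C/(λμ)`. -/
theorem stmt1 {r : ℕ} (μ L C lam : ℝ)
    (f g : EuclideanSpace ℝ (Fin r) → ℝ)
    (f' : EuclideanSpace ℝ (Fin r) → EuclideanSpace ℝ (Fin r))
    (ystar ylam : EuclideanSpace ℝ (Fin r))
    (hμ : 0 < μ) (hL : 0 ≤ L)
    (hg : StrongConvexOn univ μ g)
    (hgmin : IsMinOn g univ ystar)
    (hf : ∀ y, HasGradientAt f (f' y) y)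
    (hflip : ∀ y₁ y₂, ‖f' y₁ - f' y₂‖ ≤ L * ‖y₁ - y₂‖)
    (hC : ‖f' ystar‖ ≤ C)
    (hlam : lam > 2 * L / μ)
    (hp : StrongConvexOn univ (lam * μ / 2) (fun y => f y + lam * (g y - g ystar)))
    (hpmin : IsMinOn (fun y => f y + lam * (g y - g ystar)) univ ylam) :
    ‖ystar - ylam‖ ≤ 2 * C / (lam * μ) := by
  have hlam0 : 0 < lam := lt_of_le_of_lt (by positivity) hlam
  have hlm : 2 * L < lam * μ := by
    rw [gt_iff_lt, div_lt_iff₀ hμ] at hlam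
    linarith
  set D := ‖ystar - ylam‖ with hD
  have hD0 : 0 ≤ D := norm_nonneg _
  have hnorm : ‖ylam - ystar‖ = D := by rw [hD, ← norm_neg]; congr 1; abel
  have hC0 : 0 ≤ C := le_trans (norm_nonneg _) hC
  -- quadratic growth of p at ylam
  have h1 := quadGrowth hp hpmin ystar
  simp only [sub_self, mul_zero, add_zero] at h1
  -- quadratic growth of g at ystar
  have h2 := quadGrowth hg hgmin ylam
  rw [hnorm] at h2
  -- descent for -f at ystar
  have hfneg : ∀ y, HasGradientAt (fun z => -f z) (-f' y) y := by
    intro y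
    have hneg := (hf y).hasFDerivAt.neg
    have h2' : HasFDerivAt (fun z => -f z) (InnerProductSpace.toDual ℝ _ (-f' y)) y := by
      simpa [map_neg, Pi.neg_def] using hneg
    exact (hasGradientAt_iff_hasFDerivAt).mpr h2'
  have hlipneg : ∀ y₁ y₂, ‖(-f' y₁) - (-f' y₂)‖ ≤ L * ‖y₁ - y₂‖ := by
    intro y₁ y₂
    have he : -f' y₁ - -f' y₂ = -(f' y₁ - f' y₂) := by abel
    rw [he, norm_neg]
    exact hflip y₁ y₂
  have h3 := descent hfneg hlipneg ystar ylam
  have hinner : ⟪-f' ystar, ylam - ystar⟫ ≤ C * D := by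
    calc ⟪-f' ystar, ylam - ystar⟫ ≤ ‖-f' ystar‖ * ‖ylam - ystar‖ := real_inner_le_norm _ _
      _ = ‖f' ystar‖ * D := by rw [norm_neg, hnorm]
      _ ≤ C * D := mul_le_mul_of_nonneg_right hC hD0
  rw [hnorm] at h3
  have key : lam * μ / 2 * D ^ 2 ≤ C * D := by nlinarith
  rcases eq_or_lt_of_le hD0 with h | h
  · rw [← h]; positivity
  · rw [le_div_iff₀ (by positivity : 0 < lam * μ)]
    nlinarith
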